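/- Let B be a basis of an n-dimensional normed space E over K = k(t), and let κ = #Sig(E) be the number of distinct classes mod ℤ of norms of nonzero vectors of E. Any sequence of reduction steps (each replacing some b ∈ B by b + α with α an A-linear combination of B \ {b} and strictly smaller norm) transforming B into a reduced basis has length at most κ·⌊OD(B)⌋ + (κ-1)·n. -/

import Mathlib

open scoped Classical in
/-- The degree function `|·| = -v_∞` on `K = k(t)`, with `|0| = -∞`. -/
noncomputable def degK {k : Type*} [Field k] (a : RatFunc k) : WithBot ℝ :=
  if a = 0 then ⊥ else ((a.intDegree : ℝ) : WithBot ℝ)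

section helpers
variable {k : Type*} [Field k]

lemma degK_zero : degK (0 : RatFunc k) = ⊥ := if_pos rfl

lemma degK_of_ne {a : RatFunc k} (h : a ≠ 0) :
    degK a = ((a.intDegree : ℝ) : WithBot ℝ) := if_neg h

lemma degK_eq_bot {a : RatFunc k} : degK a = ⊥ ↔ a = 0 := by
  unfold degK; split <;> simp_all

lemma degK_neg (a : RatFunc k) : degK (-a) = degK a := by
  rcases eq_or_ne a 0 with rfl | h
  · simp
  · rw [degK_of_ne (neg_ne_zero.2 h), degK_of_ne h, RatFunc.intDegree_neg]

lemma degK_mul (a b : RatFunc k) : degK (a * b) = degK a + degK b := by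
  rcases eq_or_ne a 0 with rfl | ha
  · simp [degK_zero]
  rcases eq_or_ne b 0 with rfl | hb
  · simp [degK_zero]
  rw [degK_of_ne (mul_ne_zero ha hb), degK_of_ne ha, degK_of_ne hb,
    RatFunc.intDegree_mul ha hb, ← WithBot.coe_add]
  push_cast
  rfl

lemma degK_add_le (a b : RatFunc k) : degK (a + b) ≤ max (degK a) (degK b) := by
  rcases eq_or_ne (a + b) 0 with h | h
  · simp [h, degK_zero]
  rcases eq_or_ne a 0 with rfl | ha
  · simp
  rcases eq_or_ne b 0 with rfl | hb
  · simp
  rw [degK_of_ne h, degK_of_ne ha, degK_of_ne hb]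
  have h2 := RatFunc.intDegree_add_le hb h
  have h3 : ((RatFunc.intDegree (a+b) : ℝ)) ≤ max ((RatFunc.intDegree a : ℝ)) ((RatFunc.intDegree b : ℝ)) := by
    push_cast
    exact_mod_cast h2
  rw [← WithBot.coe_max]
  exact WithBot.coe_le_coe.2 h3

lemma coe_sum_withBot {ι : Type*} (s : Finset ι) (f : ι → ℝ) :
    ((∑ i ∈ s, f i : ℝ) : WithBot ℝ) = ∑ i ∈ s, ((f i : ℝ) : WithBot ℝ) := by
  induction s using Finset.cons_induction with
  | empty => simp
  | cons a s ha ih => rw [Finset.sum_cons, Finset.sum_cons, ← ih, WithBot.coe_add]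

lemma degK_sum_le {ι : Type*} (s : Finset ι) (f : ι → RatFunc k) :
    degK (∑ i ∈ s, f i) ≤ s.sup fun i => degK (f i) := by
  induction s using Finset.cons_induction with
  | empty => simp [degK_zero]
  | cons a s ha ih =>
    rw [Finset.sum_cons, Finset.sup_cons]
    exact le_trans (degK_add_le _ _) (max_le_max le_rfl ih)

lemma degK_prod {ι : Type*} (s : Finset ι) (f : ι → RatFunc k) :
    degK (∏ i ∈ s, f i) = ∑ i ∈ s, degK (f i) := by
  induction s using Finset.cons_induction with
  | empty =>
    rw [Finset.prod_empty, Finset.sum_empty, degK_of_ne (one_ne_zero (α := RatFunc k)), RatFunc.intDegree_one]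
    simp
  | cons a s ha ih => rw [Finset.prod_cons, Finset.sum_cons, degK_mul, ih]

lemma degK_det_le {n : ℕ} (M : Matrix (Fin n) (Fin n) (RatFunc k)) (e f : Fin n → ℝ)
    (h : ∀ i j, degK (M i j) ≤ ((e i - f j : ℝ) : WithBot ℝ)) :
    degK M.det ≤ (((∑ i, e i) - ∑ j, f j : ℝ) : WithBot ℝ) := by
  rw [Matrix.det_apply]
  refine le_trans (degK_sum_le _ _) ((Finset.sup_le_iff).2 fun σ _ => ?_)
  have hsign : degK (Equiv.Perm.sign σ • ∏ i, M (σ i) i) = degK (∏ i, M (σ i) i) := by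
    rcases Int.units_eq_one_or (Equiv.Perm.sign σ) with h1 | h1 <;> rw [h1]
    · rw [one_smul]
    · rw [Units.smul_def, Units.val_neg, Units.val_one, neg_one_zsmul]
      exact degK_neg _
  rw [hsign, degK_prod]
  calc (∑ i, degK (M (σ i) i)) ≤ ∑ i : Fin n, ((e (σ i) - f i : ℝ) : WithBot ℝ) :=
        Finset.sum_le_sum fun i _ => h _ _
    _ = ((∑ i : Fin n, (e (σ i) - f i) : ℝ) : WithBot ℝ) := (coe_sum_withBot _ _).symm
    _ = _ := by rw [Finset.sum_sub_distrib, Equiv.sum_comp σ e]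

end helpers

set_option maxHeartbeats 1000000 in
set_option synthInstance.maxHeartbeats 200000 in
/-- Let `B` be a basis of an `n`-dimensional normed space `E` over
`K = k(t)` and `κ = #Sig(E)`.  Any sequence of reduction steps (each replacing some `bᵢ`
by `bᵢ + α` with `α` an `A`-combination of the others and strictly smaller norm) that
transforms `B` into a reduced basis has length at most `κ⌊OD(B)⌋ + (κ-1)n`. -/
theorem stmt17 {k : Type*} [Field k] {E : Type*} [AddCommGroup E]
    [Module (RatFunc k) E] [Module (Polynomial k) E] [Module k E]
    [IsScalarTower (Polynomial k) (RatFunc k) E] [IsScalarTower k (RatFunc k) E]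
    (N : E → WithBot ℝ)
    (hadd : ∀ x y : E, N (x + y) ≤ max (N x) (N y))
    (hsmul : ∀ (a : RatFunc k) (x : E), N (a • x) = degK a + N x)
    (hzero : ∀ x : E, N x = ⊥ ↔ x = 0)
    (hlat : ∃ s : Finset E, Submodule.span (RatFunc k) (s : Set E) = ⊤ ∧
      ∀ r : ℝ, ∃ S : Finset E,
        {x : E | x ∈ Submodule.span (Polynomial k) (s : Set E) ∧ N x ≤ (r : ℝ)} ⊆
          (Submodule.span k (S : Set E) : Set E))
    (n : ℕ) (b b' : Fin n → E)
    (hbasis : LinearIndependent (RatFunc k) b ∧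
      Submodule.span (RatFunc k) (Set.range b) = ⊤)
    (hred' : ∀ a : Fin n → RatFunc k,
      N (∑ i, a i • b' i) = Finset.univ.sup (fun i => degK (a i) + N (b' i)))
    (r' : Fin n → ℝ) (hr' : ∀ i, N (b' i) = ((r' i : ℝ) : WithBot ℝ))
    (horth : ∀ i, -1 < r' i ∧ r' i ≤ 0)
    (r : Fin n → ℝ) (hr : ∀ i, N (b i) = ((r i : ℝ) : WithBot ℝ))
    (T : Matrix (Fin n) (Fin n) (RatFunc k))
    (hT : ∀ i, b i = ∑ j, T i j • b' j)
    (OD : ℝ) (hOD : OD = (∑ i, r i) - (∑ i, r' i) - (T.det.intDegree : ℝ))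
    -- the signature of `E` consists of exactly `κ` classes mod `ℤ`, represented by `ρ`
    (κ : ℕ) (ρ : Fin κ → ℝ)
    (hsig1 : ∀ x : E, x ≠ 0 → ∃ (j : Fin κ) (m : ℤ), N x = ((ρ j + m : ℝ) : WithBot ℝ))
    (hsig2 : ∀ j j' : Fin κ, (∃ m : ℤ, ρ j = ρ j' + m) → j = j')
    -- a sequence of `mlen` reduction steps starting from `B`
    (mlen : ℕ) (c : ℕ → Fin n → E) (hc0 : c 0 = b)
    (hstep : ∀ s < mlen, ∃ i₀ : Fin n,
      (∀ j : Fin n, j ≠ i₀ → c (s + 1) j = c s j) ∧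
      (c (s + 1) i₀ - c s i₀) ∈
        Submodule.span (Polynomial k) (c s '' {j : Fin n | j ≠ i₀}) ∧
      N (c (s + 1) i₀) < N (c s i₀))
    -- ending in a reduced basis
    (hredend : ∀ a : Fin n → RatFunc k,
      N (∑ i, a i • c mlen i) =
        Finset.univ.sup (fun i => degK (a i) + N (c mlen i))) :
    (mlen : ℤ) ≤ (κ : ℤ) * ⌊OD⌋ + ((κ : ℤ) - 1) * n := by
  classical
  rcases Nat.eq_zero_or_pos n with hn | hn
  · subst hn
    have hm : mlen = 0 := by
      by_contra h
      obtain ⟨i₀, -⟩ := hstep 0 (Nat.pos_of_ne_zero h)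
      exact i₀.elim0
    have hdet : T.det = 1 := Matrix.det_isEmpty
    norm_num [hm, hOD, hdet, RatFunc.intDegree_one]
  -- b' is linearly independent
  have hb'li : LinearIndependent (RatFunc k) b' := by
    rw [Fintype.linearIndependent_iff]
    intro g hg i
    have h0 : N (∑ i, g i • b' i) = ⊥ := (hzero _).2 hg
    rw [hred'] at h0
    have h1 : degK (g i) + N (b' i) = ⊥ :=
      le_bot_iff.1 (h0 ▸ Finset.le_sup (f := fun i => degK (g i) + N (b' i)) (Finset.mem_univ i))
    rw [hr' i] at h1
    rcases WithBot.add_eq_bot.1 h1 with hb | hb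
    · exact degK_eq_bot.1 hb
    · exact absurd hb WithBot.coe_ne_bot
  have hb'span : ⊤ ≤ Submodule.span (RatFunc k) (Set.range b') := by
    rw [← hbasis.2]
    refine Submodule.span_le.2 ?_
    rintro x ⟨i, rfl⟩
    rw [hT i]
    exact Submodule.sum_mem _ fun j _ =>
      Submodule.smul_mem _ _ (Submodule.subset_span ⟨j, rfl⟩)
  set B' : Module.Basis (Fin n) (RatFunc k) E := Module.Basis.mk hb'li hb'span with hB'def
  have hB' : ∀ j, B' j = b' j := fun j => by rw [hB'def, Module.Basis.coe_mk]
  have hrepr : ∀ x : E, x = ∑ j, B'.repr x j • b' j := by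
    intro x
    conv_lhs => rw [← B'.sum_repr x]
    exact Finset.sum_congr rfl fun j _ => by rw [hB']
  set U : ℕ → Matrix (Fin n) (Fin n) (RatFunc k) :=
    fun s => Matrix.of fun i j => B'.repr (c s i) j with hUdef
  have hUapp : ∀ s i j, U s i j = B'.repr (c s i) j := fun s i j => rfl
  have hreprT : ∀ i j, B'.repr (b i) j = T i j := by
    intro i j
    have hb : b i = ∑ jj, T i jj • B' jj := by
      rw [hT i]; exact Finset.sum_congr rfl fun jj _ => by rw [hB']
    rw [hb, Module.Basis.repr_sum_self]
  have hdetstep : ∀ s, s < mlen → (U (s+1)).det = (U s).det := by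
    intro s hs
    obtain ⟨i₀, h1, h2, -⟩ := hstep s hs
    rw [Finsupp.mem_span_image_iff_linearCombination] at h2
    obtain ⟨l, hl, hsum⟩ := h2
    set q : Fin n → RatFunc k := fun j => algebraMap (Polynomial k) (RatFunc k) (l j) with hqdef
    have hq0 : q i₀ = 0 := by
      have hl0 : l i₀ = 0 := by
        by_contra h
        exact (hl (Finsupp.mem_support_iff.2 h)) rfl
      simp [hqdef, hl0]
    have hc1 : c (s+1) i₀ = c s i₀ + ∑ j, q j • c s j := by
      have h4 : c (s+1) i₀ - c s i₀ = ∑ j, q j • c s j := by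
        rw [← hsum, Finsupp.linearCombination_apply, Finsupp.sum_fintype]
        · exact Finset.sum_congr rfl fun j _ =>
            (IsScalarTower.algebraMap_smul (RatFunc k) (l j) (c s j)).symm
        · intro; exact zero_smul _ _
      rw [← h4]; abel
    have hUeq : U (s+1) = Matrix.updateRow (U s) i₀
        ((1 : RatFunc k) • (U s) i₀ + ∑ jj ∈ Finset.univ.erase i₀, q jj • (U s) jj) := by
      ext i j
      by_cases hi : i = i₀
      · rw [hi, Matrix.updateRow_self]
        have hrow : B'.repr (c (s+1) i₀) j
            = B'.repr (c s i₀) j + ∑ jj, q jj * B'.repr (c s jj) j := by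
          rw [hc1, map_add, map_sum, Finsupp.add_apply, Finsupp.finset_sum_apply]
          congr 1
          exact Finset.sum_congr rfl fun jj _ => by
            rw [map_smul, Finsupp.smul_apply, smul_eq_mul]
        rw [hUapp, hrow, Pi.add_apply, Pi.smul_apply, one_smul, Finset.sum_apply]
        congr 1
        have he : ∀ jj, (q jj • (U s) jj) j = q jj * B'.repr (c s jj) j := fun jj => by
          rw [Pi.smul_apply, smul_eq_mul, hUapp]
        rw [Finset.sum_congr rfl fun jj _ => he jj]
        exact (Finset.sum_erase _ (by rw [hq0, zero_mul])).symm
      · rw [Matrix.updateRow_ne hi, hUapp, hUapp, h1 i hi]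
    rw [hUeq, Matrix.det_updateRow_sum_aux (U s) (Finset.univ.erase i₀)
      (Finset.notMem_erase i₀ Finset.univ) q 1, one_smul]
  have hU0 : U 0 = T := by
    ext i j
    rw [hUapp, hc0, hreprT]
  have hdetall : ∀ s, s ≤ mlen → (U s).det = T.det := by
    intro s
    induction s with
    | zero => intro _; rw [hU0]
    | succ s ih => intro h; rw [hdetstep s (by omega), ih (by omega)]
  have hTdet : T.det ≠ 0 := by
    set Bb : Module.Basis (Fin n) (RatFunc k) E := Module.Basis.mk hbasis.1 (le_of_eq hbasis.2.symm) with hBbdef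
    have h1 : B'.toMatrix ⇑Bb * Bb.toMatrix ⇑B' = 1 := Module.Basis.toMatrix_mul_toMatrix_flip B' Bb
    have h2 : (B'.toMatrix ⇑Bb).det * (Bb.toMatrix ⇑B').det = 1 := by
      rw [← Matrix.det_mul, h1, Matrix.det_one]
    have h3 : B'.toMatrix ⇑Bb = T.transpose := by
      ext i j
      rw [Module.Basis.toMatrix_apply, Matrix.transpose_apply]
      have hBbj : Bb j = b j := by rw [hBbdef, Module.Basis.coe_mk]
      rw [hBbj, hreprT]
    intro h0
    rw [h3, Matrix.det_transpose, h0, zero_mul] at h2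
    exact zero_ne_one h2
  have hnz : ∀ s, s ≤ mlen → ∀ i, c s i ≠ 0 := by
    intro s hs i h0
    apply hTdet
    rw [← hdetall s hs]
    apply Matrix.det_eq_zero_of_row_eq_zero i
    intro j
    rw [hUapp, h0, map_zero]
    rfl
  set w : ℕ → Fin n → ℝ := fun s i => (N (c s i)).unbotD 0 with hwdef
  have hw : ∀ s, s ≤ mlen → ∀ i, N (c s i) = ((w s i : ℝ) : WithBot ℝ) := by
    intro s hs i
    obtain ⟨v, hv⟩ := WithBot.ne_bot_iff_exists.1
      (fun hb => hnz s hs i ((hzero _).1 hb))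
    rw [← hv]
    simp [hwdef, ← hv]
  choose ch hch1 hch2 hch3 using hstep
  set ch' : ℕ → Fin n := fun s => if h : s < mlen then ch s h else ⟨0, hn⟩ with hch'def
  have hmono1 : ∀ s, s < mlen → ∀ i, N (c (s+1) i) ≤ N (c s i) := by
    intro s hs i
    by_cases hi : i = ch s hs
    · subst hi; exact le_of_lt (hch3 s hs)
    · rw [hch1 s hs i hi]
  have hmono : ∀ s s' i, s ≤ s' → s' ≤ mlen → N (c s' i) ≤ N (c s i) := by
    intro s s' i hss'
    induction s', hss' using Nat.le_induction with
    | base => intro _; exact le_rfl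
    | succ s' hs' ih => intro h; exact le_trans (hmono1 s' (by omega) i) (ih (by omega))
  have hwmono : ∀ s s' i, s ≤ s' → s' ≤ mlen → w s' i ≤ w s i := by
    intro s s' i h1 h2
    have := hmono s s' i h1 h2
    rw [hw s (le_trans h1 h2) i, hw s' h2 i] at this
    exact WithBot.coe_le_coe.1 this
  have hwstrict : ∀ s, s < mlen → ∀ s', s < s' → s' ≤ mlen → w s' (ch' s) < w s (ch' s) := by
    intro s hs s' hss' hs'
    have hcheq : ch' s = ch s hs := dif_pos hs
    have h1 : N (c s' (ch' s)) ≤ N (c (s+1) (ch' s)) := hmono (s+1) s' (ch' s) (by omega) hs'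
    have h2 : N (c (s+1) (ch' s)) < N (c s (ch' s)) := by rw [hcheq]; exact hch3 s hs
    have h3 := lt_of_le_of_lt h1 h2
    rw [hw s (le_of_lt hs) _, hw s' hs' _] at h3
    exact WithBot.coe_lt_coe.1 h3
  have hκ : 0 < κ := by
    have hbne : b ⟨0, hn⟩ ≠ 0 := hbasis.1.ne_zero ⟨0, hn⟩
    obtain ⟨j, -, -⟩ := hsig1 _ hbne
    exact Nat.pos_of_ne_zero (fun h => by subst h; exact j.elim0)
  set Si : Fin n → Finset ℕ := fun i => (Finset.range mlen).filter (fun s => ch' s = i) with hSidef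
  have hmlencard : (Finset.range mlen).card = ∑ i, (Si i).card :=
    Finset.card_eq_sum_card_fiberwise (fun x _ => Finset.mem_univ (ch' x))
  have hD0 : ∀ i, w 0 i = r i := by
    intro i
    have h1 := hw 0 (Nat.zero_le _) i
    rw [hc0, hr i] at h1
    exact (WithBot.coe_inj.1 h1).symm
  have hper : ∀ i : Fin n, ((Si i).card : ℤ) + 1 ≤ (κ : ℤ) * (⌊w 0 i - w mlen i⌋ + 1) := by
    intro i
    have hnotmem : mlen ∉ Si i := by simp [hSidef]
    set Fi : Finset ℕ := insert mlen (Si i) with hFidef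
    have hFimem : ∀ s ∈ Fi, s ≤ mlen := by
      intro s hs
      rcases Finset.mem_insert.1 hs with rfl | hs
      · exact le_rfl
      · exact le_of_lt (Finset.mem_range.1 (Finset.mem_filter.1 hs).1)
    have hFilt : ∀ s ∈ Fi, s ≠ mlen → s < mlen ∧ ch' s = i := by
      intro s hs hne
      rcases Finset.mem_insert.1 hs with rfl | hs
      · exact absurd rfl hne
      · exact ⟨Finset.mem_range.1 (Finset.mem_filter.1 hs).1, (Finset.mem_filter.1 hs).2⟩
    have hgap : ∀ x ∈ Fi, ∀ y ∈ Fi, x < y → w y i < w x i := by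
      intro x hx y hy hxy
      have hym := hFimem y hy
      have hxne : x ≠ mlen := by omega
      obtain ⟨hxlt, hchx⟩ := hFilt x hx hxne
      have := hwstrict x hxlt y hxy hym
      rwa [hchx] at this
    have hclass : ∀ s : ℕ, ∃ (j : Fin κ) (m : ℤ), s ≤ mlen → w s i = ρ j + m := by
      intro s
      by_cases hs : s ≤ mlen
      · obtain ⟨j, m, hjm⟩ := hsig1 (c s i) (hnz s hs i)
        refine ⟨j, m, fun _ => ?_⟩
        have h1 := hw s hs i
        rw [hjm] at h1
        exact (WithBot.coe_inj.1 h1).symm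
      · exact ⟨⟨0, hκ⟩, 0, fun h => absurd h hs⟩
    choose cls ms hcls using hclass
    have hmaps : ∀ s ∈ Fi, (cls s, ⌊w s i - w mlen i⌋) ∈
        Finset.univ ×ˢ Finset.Icc (0:ℤ) ⌊w 0 i - w mlen i⌋ := by
      intro s hs
      refine Finset.mem_product.2 ⟨Finset.mem_univ _, Finset.mem_Icc.2 ⟨?_, ?_⟩⟩
      · exact Int.floor_nonneg.2 (by linarith [hwmono s mlen i (hFimem s hs) le_rfl])
      · exact Int.floor_le_floor (by linarith [hwmono 0 s i (Nat.zero_le s) (hFimem s hs)])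
    have key : ∀ x ∈ Fi, ∀ y ∈ Fi, x < y → cls x = cls y →
        ⌊w y i - w mlen i⌋ < ⌊w x i - w mlen i⌋ := by
      intro x hx y hy hxy hcl
      have h1 := hcls x (hFimem x hx)
      have h2 := hcls y (hFimem y hy)
      have hlt := hgap x hx y hy hxy
      rw [hcl] at h1
      have hms : (ms y : ℝ) < ms x := by rw [h1, h2] at hlt; linarith
      have hms' : (ms y : ℝ) + 1 ≤ ms x := by exact_mod_cast Int.add_one_le_iff.2 (by exact_mod_cast hms)
      have hw1 : w y i + 1 ≤ w x i := by rw [h1, h2]; linarith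
      calc ⌊w y i - w mlen i⌋ < ⌊w y i - w mlen i⌋ + 1 := lt_add_one _
        _ = ⌊(w y i - w mlen i) + 1⌋ := (Int.floor_add_one _).symm
        _ ≤ ⌊w x i - w mlen i⌋ := Int.floor_le_floor (by linarith)
    have hinj : Set.InjOn (fun s => (cls s, ⌊w s i - w mlen i⌋)) Fi := by
      intro x hx y hy heq
      by_contra hne
      simp only [Prod.mk.injEq] at heq
      rcases Ne.lt_or_gt hne with h | h
      · have := key x hx y hy h heq.1
        omega
      · have := key y hy x hx h heq.1.symm
        omega
    have hcard2 := Finset.card_le_card_of_injOn _ hmaps hinj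
    have hDnn : (0:ℤ) ≤ ⌊w 0 i - w mlen i⌋ :=
      Int.floor_nonneg.2 (by linarith [hwmono 0 mlen i (Nat.zero_le _) le_rfl])
    rw [hFidef, Finset.card_insert_of_notMem hnotmem, Finset.card_product, Finset.card_univ,
      Fintype.card_fin, Int.card_Icc] at hcard2
    have hcast := (Nat.cast_le (α := ℤ)).2 hcard2
    push_cast at hcast
    rw [Int.toNat_of_nonneg (by omega)] at hcast
    simpa using hcast
  -- Hadamard inequality at the end of the reduction
  have hentry : ∀ i j, degK (U mlen i j) ≤ ((w mlen i - r' j : ℝ) : WithBot ℝ) := by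
    intro i j
    have h1 : N (c mlen i) = Finset.univ.sup (fun j => degK (U mlen i j) + N (b' j)) := by
      conv_lhs => rw [hrepr (c mlen i)]
      exact hred' fun j => B'.repr (c mlen i) j
    have h2 : degK (U mlen i j) + N (b' j) ≤ N (c mlen i) :=
      h1 ▸ Finset.le_sup (f := fun j => degK (U mlen i j) + N (b' j)) (Finset.mem_univ j)
    rw [hw mlen le_rfl i, hr' j] at h2
    rcases eq_or_ne (U mlen i j) 0 with h0 | h0
    · rw [h0, degK_zero]; exact bot_le
    · rw [degK_of_ne h0] at h2 ⊢
      rw [← WithBot.coe_add] at h2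
      have h3 := WithBot.coe_le_coe.1 h2
      exact WithBot.coe_le_coe.2 (by linarith)
  have hhad := degK_det_le (U mlen) (fun i => w mlen i) r' hentry
  rw [hdetall mlen le_rfl, degK_of_ne hTdet] at hhad
  have hdeg : (T.det.intDegree : ℝ) ≤ (∑ i, w mlen i) - ∑ j, r' j :=
    WithBot.coe_le_coe.1 hhad
  have hfloor : ∑ i : Fin n, ⌊w 0 i - w mlen i⌋ ≤ ⌊OD⌋ := by
    have h2 : ∑ i : Fin n, (w 0 i - w mlen i) ≤ OD := by
      rw [hOD]
      have h3 : ∑ i : Fin n, (w 0 i - w mlen i) = (∑ i, r i) - ∑ i, w mlen i := by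
        rw [Finset.sum_sub_distrib]
        congr 1
        exact Finset.sum_congr rfl fun i _ => hD0 i
      rw [h3]; linarith
    refine Int.le_floor.2 (le_trans ?_ h2)
    push_cast
    exact Finset.sum_le_sum fun i _ => Int.floor_le _
  have hmlen : (mlen : ℤ) = ∑ i : Fin n, ((Si i).card : ℤ) := by
    have h1 : mlen = ∑ i, (Si i).card := by
      rw [← Finset.card_range mlen]; exact hmlencard
    rw [h1]; push_cast; rfl
  have h4 : (mlen : ℤ) ≤ ∑ i : Fin n, ((κ:ℤ) * (⌊w 0 i - w mlen i⌋ + 1) - 1) := by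
    rw [hmlen]
    exact Finset.sum_le_sum fun i _ => by linarith [hper i]
  have h5 : ∑ i : Fin n, ((κ:ℤ) * (⌊w 0 i - w mlen i⌋ + 1) - 1)
      = (κ:ℤ) * (∑ i : Fin n, ⌊w 0 i - w mlen i⌋) + ((κ:ℤ) - 1) * n := by
    rw [Finset.sum_congr rfl (fun i _ => by ring :
      ∀ i ∈ Finset.univ, (κ:ℤ) * (⌊w 0 i - w mlen i⌋ + 1) - 1
        = (κ:ℤ) * ⌊w 0 i - w mlen i⌋ + ((κ:ℤ) - 1)),
      Finset.sum_add_distrib, Finset.sum_const, ← Finset.mul_sum, Finset.card_univ,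
      Fintype.card_fin, nsmul_eq_mul, mul_comm ((n:ℕ):ℤ) _]
  have h6 : (κ:ℤ) * (∑ i : Fin n, ⌊w 0 i - w mlen i⌋) ≤ (κ:ℤ) * ⌊OD⌋ :=
    mul_le_mul_of_nonneg_left hfloor (by positivity)
  calc (mlen : ℤ) ≤ _ := h4
    _ = _ := h5
    _ ≤ (κ:ℤ) * ⌊OD⌋ + ((κ:ℤ) - 1) * n := by linarith
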